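/- Let Δ > 0, let b : ℤ → ℝ and φ : ℝ → ℝ be such that (|b| ⋆ |φ|)(t) = Σ_{s∈ℤ} |b(s)||φ(t − sΔ)| is finite for a.e. t, and suppose G(t) := Σ_{s∈ℤ} |φ(t + sΔ)| (|b| ⋆ |φ|)(t + sΔ) defines a function in L²([0, Δ]). Define c(t, s, u) = ∫_ℝ φ(tΔ + v) φ(sΔ + v) φ(uΔ + v) φ(v) dv. Then Σ_{t∈ℤ} Σ_{s∈ℤ} Σ_{u∈ℤ} |b(t) b(s) c(t + u, s, u)| ≤ ∫_0^Δ G(v)² dv < ∞. -/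
import Mathlib

open MeasureTheory Set ENNReal

noncomputable def auxF (φ : ℝ → ℝ) (x : ℝ) : ℝ≥0∞ := ENNReal.ofReal |φ x|

noncomputable def auxB (b : ℤ → ℝ) (t : ℤ) : ℝ≥0∞ := ENNReal.ofReal |b t|

noncomputable def auxH (β : ℤ → ℝ≥0∞) (F : ℝ → ℝ≥0∞) (Δ : ℝ) (x : ℝ) : ℝ≥0∞ :=
  ∑' t : ℤ, β t * F (x + (t : ℝ) * Δ)

noncomputable def auxG (β : ℤ → ℝ≥0∞) (F : ℝ → ℝ≥0∞) (Δ : ℝ) (x : ℝ) : ℝ≥0∞ :=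
  ∑' s : ℤ, F (x + (s : ℝ) * Δ) * auxH β F Δ (x + (s : ℝ) * Δ)

lemma auxG_alt (β : ℤ → ℝ≥0∞) (F : ℝ → ℝ≥0∞) (Δ : ℝ) (x : ℝ) :
    auxG β F Δ x
      = ∑' s : ℤ, F (x + (s : ℝ) * Δ) * ∑' u : ℤ, β u * F (x + (s : ℝ) * Δ - (u : ℝ) * Δ) := by
  simp only [auxG, auxH]
  simp_rw [← ENNReal.tsum_mul_left]
  rw [ENNReal.tsum_comm]
  conv_rhs => rw [ENNReal.tsum_comm]
  refine tsum_congr fun t => ?_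
  rw [← (Equiv.addRight t).tsum_eq
    (fun s : ℤ => F (x + (s : ℝ) * Δ) * (β t * F (x + (s : ℝ) * Δ - (t : ℝ) * Δ)))]
  refine tsum_congr fun s => ?_
  simp only [Equiv.coe_addRight]
  push_cast
  rw [show x + ((s : ℝ) + t) * Δ - t * Δ = x + s * Δ by ring,
      show x + ((s : ℝ) + t) * Δ = x + (s : ℝ) * Δ + t * Δ by ring]
  ring

lemma auxG_per (β : ℤ → ℝ≥0∞) (F : ℝ → ℝ≥0∞) (Δ : ℝ) (k : ℤ) (x : ℝ) :
    auxG β F Δ (x + (k : ℝ) * Δ) = auxG β F Δ x := by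
  simp only [auxG]
  rw [← (Equiv.addRight k).tsum_eq
    (fun s : ℤ => F (x + (s : ℝ) * Δ) * auxH β F Δ (x + (s : ℝ) * Δ))]
  refine tsum_congr fun s => ?_
  simp only [Equiv.coe_addRight]
  push_cast
  rw [show x + (k : ℝ) * Δ + (s : ℝ) * Δ = x + ((s : ℝ) + k) * Δ by ring]

lemma key_pointwise (β : ℤ → ℝ≥0∞) (F : ℝ → ℝ≥0∞) (Δ : ℝ) (v : ℝ) :
    (∑' t : ℤ, ∑' s : ℤ, ∑' u : ℤ, β t * β s *
        (F (v + ((t : ℝ) + (u : ℝ)) * Δ) * F (v + (s : ℝ) * Δ) * F (v + (u : ℝ) * Δ) * F v))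
      = F v * auxH β F Δ v * auxG β F Δ v := by
  have hsplit : ∀ t : ℤ, (∑' s : ℤ, ∑' u : ℤ, β t * β s *
        (F (v + ((t : ℝ) + (u : ℝ)) * Δ) * F (v + (s : ℝ) * Δ) * F (v + (u : ℝ) * Δ) * F v))
      = auxH β F Δ v *
          ∑' u : ℤ, (β t * F (v + (u : ℝ) * Δ + (t : ℝ) * Δ)) * (F (v + (u : ℝ) * Δ) * F v) := by
    intro t
    simp only [auxH]
    conv_rhs => rw [← ENNReal.tsum_mul_right]
    refine tsum_congr fun s => ?_
    conv_rhs => rw [← ENNReal.tsum_mul_left]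
    refine tsum_congr fun u => ?_
    rw [show v + ((t : ℝ) + (u : ℝ)) * Δ = v + (u : ℝ) * Δ + (t : ℝ) * Δ by ring]
    ring
  calc (∑' t : ℤ, ∑' s : ℤ, ∑' u : ℤ, β t * β s *
        (F (v + ((t : ℝ) + (u : ℝ)) * Δ) * F (v + (s : ℝ) * Δ) * F (v + (u : ℝ) * Δ) * F v))
      = ∑' t : ℤ, auxH β F Δ v *
          ∑' u : ℤ, (β t * F (v + (u : ℝ) * Δ + (t : ℝ) * Δ)) * (F (v + (u : ℝ) * Δ) * F v) :=
        tsum_congr hsplit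
    _ = auxH β F Δ v * ∑' t : ℤ,
          ∑' u : ℤ, (β t * F (v + (u : ℝ) * Δ + (t : ℝ) * Δ)) * (F (v + (u : ℝ) * Δ) * F v) :=
        ENNReal.tsum_mul_left
    _ = auxH β F Δ v * ∑' u : ℤ,
          (∑' t : ℤ, β t * F (v + (u : ℝ) * Δ + (t : ℝ) * Δ)) * (F (v + (u : ℝ) * Δ) * F v) := by
        rw [ENNReal.tsum_comm]
        exact congrArg (fun z => auxH β F Δ v * z)
          (tsum_congr fun u => ENNReal.tsum_mul_right)
    _ = auxH β F Δ v * ((∑' u : ℤ, F (v + (u : ℝ) * Δ) * auxH β F Δ (v + (u : ℝ) * Δ)) * F v) := by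
        congr 1
        conv_rhs => rw [← ENNReal.tsum_mul_right]
        refine tsum_congr fun u => ?_
        simp only [auxH]
        ring
    _ = F v * auxH β F Δ v * auxG β F Δ v := by
        simp only [auxG]
        ring

lemma periodize (Δ : ℝ) (hΔ : 0 < Δ) (f : ℝ → ℝ≥0∞) :
    ∫⁻ v, f v = ∑' n : ℤ, ∫⁻ v in Ioc (0 : ℝ) Δ, f (v + (n : ℝ) * Δ) := by
  have h1 : ∫⁻ v, f v
      = ∑' n : ℤ, ∫⁻ v in Ioc ((0 : ℝ) + n • Δ) (0 + (n + 1) • Δ), f v := by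
    rw [← lintegral_iUnion (fun n => measurableSet_Ioc)
        (pairwise_disjoint_Ioc_add_zsmul 0 Δ) f, iUnion_Ioc_add_zsmul hΔ 0,
        Measure.restrict_univ]
  rw [h1]
  refine tsum_congr fun n => ?_
  have hmem : ∀ v : ℝ,
      v + (n : ℝ) * Δ ∈ Ioc ((0 : ℝ) + n • Δ) (0 + (n + 1) • Δ) ↔ v ∈ Ioc (0 : ℝ) Δ := by
    intro v
    simp only [mem_Ioc, zsmul_eq_mul, zero_add]
    push_cast
    constructor <;> rintro ⟨h1, h2⟩ <;> constructor <;> nlinarith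
  calc ∫⁻ v in Ioc ((0 : ℝ) + n • Δ) (0 + (n + 1) • Δ), f v
      = ∫⁻ v, (Ioc ((0 : ℝ) + n • Δ) (0 + (n + 1) • Δ)).indicator f v :=
        (lintegral_indicator measurableSet_Ioc f).symm
    _ = ∫⁻ v, (Ioc ((0 : ℝ) + n • Δ) (0 + (n + 1) • Δ)).indicator f (v + (n : ℝ) * Δ) :=
        (lintegral_add_right_eq_self _ ((n : ℝ) * Δ)).symm
    _ = ∫⁻ v, (Ioc (0 : ℝ) Δ).indicator (fun w => f (w + (n : ℝ) * Δ)) v := by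
        refine lintegral_congr fun v => ?_
        by_cases h : v ∈ Ioc (0 : ℝ) Δ
        · rw [indicator_of_mem h, indicator_of_mem ((hmem v).mpr h)]
        · rw [indicator_of_notMem h, indicator_of_notMem (fun hc => h ((hmem v).mp hc))]
    _ = ∫⁻ v in Ioc (0 : ℝ) Δ, f (v + (n : ℝ) * Δ) :=
        lintegral_indicator measurableSet_Ioc _

/-- Absolute summability of the fourth-cumulant triple sum, bounded by the squared
`L²([0,Δ])` norm of `G(t) = Σ_s |φ(t+sΔ)| (|b| ⋆ |φ|)(t+sΔ)`. -/
theorem stmt13 (Δ : ℝ) (hΔ : 0 < Δ) (b : ℤ → ℝ) (φ : ℝ → ℝ) (hφ : Measurable φ)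
    (hfin : ∀ᵐ t : ℝ, (∑' s : ℤ, ENNReal.ofReal (|b s| * |φ (t - (s : ℝ) * Δ)|)) < ∞)
    (hG : (∫⁻ t in Ioc (0 : ℝ) Δ,
        (∑' s : ℤ, ENNReal.ofReal |φ (t + (s : ℝ) * Δ)| *
          ∑' u : ℤ, ENNReal.ofReal (|b u| * |φ (t + (s : ℝ) * Δ - (u : ℝ) * Δ)|)) ^ 2) < ∞) :
    (∑' t : ℤ, ∑' s : ℤ, ∑' u : ℤ,
        ENNReal.ofReal |b t| * ENNReal.ofReal |b s| *
          ∫⁻ v : ℝ, ENNReal.ofReal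
            |φ (((t + u : ℤ) : ℝ) * Δ + v) * φ ((s : ℝ) * Δ + v) *
              φ ((u : ℝ) * Δ + v) * φ v|) ≤
      (∫⁻ t in Ioc (0 : ℝ) Δ,
        (∑' s : ℤ, ENNReal.ofReal |φ (t + (s : ℝ) * Δ)| *
          ∑' u : ℤ, ENNReal.ofReal (|b u| * |φ (t + (s : ℝ) * Δ - (u : ℝ) * Δ)|)) ^ 2) ∧
    (∑' t : ℤ, ∑' s : ℤ, ∑' u : ℤ,
        ENNReal.ofReal |b t| * ENNReal.ofReal |b s| *
          ∫⁻ v : ℝ, ENNReal.ofReal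
            |φ (((t + u : ℤ) : ℝ) * Δ + v) * φ ((s : ℝ) * Δ + v) *
              φ ((u : ℝ) * Δ + v) * φ v|) < ∞ := by
  set F := auxF φ with hFdef
  set β := auxB b with hβdef
  have hFm : Measurable F := by
    rw [hFdef]; unfold auxF; exact hφ.abs.ennreal_ofReal
  have hFshift : ∀ c : ℝ, Measurable fun v => F (v + c) :=
    fun c => hFm.comp (measurable_add_const c)
  have hHm : Measurable (auxH β F Δ) := by
    unfold auxH
    exact Measurable.ennreal_tsum fun t => measurable_const.mul (hFshift _)
  have hHshift : ∀ c : ℝ, Measurable fun v => auxH β F Δ (v + c) :=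
    fun c => hHm.comp (measurable_add_const c)
  have hGm : Measurable (auxG β F Δ) := by
    unfold auxG
    exact Measurable.ennreal_tsum fun s => (hFshift _).mul (hHshift _)
  have hβtop : ∀ t s : ℤ, β t * β s ≠ ∞ := fun t s => by
    rw [hβdef]; unfold auxB; exact ENNReal.mul_ne_top ofReal_ne_top ofReal_ne_top
  have hmeas : ∀ t s u : ℤ, Measurable fun v : ℝ => β t * β s *
      (F (v + ((t : ℝ) + (u : ℝ)) * Δ) * F (v + (s : ℝ) * Δ) * F (v + (u : ℝ) * Δ) * F v) :=
    fun t s u => measurable_const.mul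
      ((((hFshift _).mul (hFshift _)).mul (hFshift _)).mul hFm)
  have hstep : ∀ t s u : ℤ, (∫⁻ v : ℝ, ENNReal.ofReal
        |φ (((t + u : ℤ) : ℝ) * Δ + v) * φ ((s : ℝ) * Δ + v) *
          φ ((u : ℝ) * Δ + v) * φ v|)
      = ∫⁻ v, F (v + ((t : ℝ) + (u : ℝ)) * Δ) * F (v + (s : ℝ) * Δ) * F (v + (u : ℝ) * Δ) * F v := by
    intro t s u
    refine lintegral_congr fun v => ?_
    rw [abs_mul, ENNReal.ofReal_mul (abs_nonneg _), abs_mul, ENNReal.ofReal_mul (abs_nonneg _),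
        abs_mul, ENNReal.ofReal_mul (abs_nonneg _)]
    rw [hFdef]; unfold auxF
    rw [show (((t + u : ℤ)) : ℝ) * Δ + v = v + ((t : ℝ) + (u : ℝ)) * Δ by push_cast; ring,
        add_comm ((s : ℝ) * Δ) v, add_comm ((u : ℝ) * Δ) v]
  have hRHS : ∀ x : ℝ,
      (∑' s : ℤ, ENNReal.ofReal |φ (x + (s : ℝ) * Δ)| *
        ∑' u : ℤ, ENNReal.ofReal (|b u| * |φ (x + (s : ℝ) * Δ - (u : ℝ) * Δ)|))
      = auxG β F Δ x := by
    intro x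
    rw [auxG_alt]
    refine tsum_congr fun s => ?_
    rw [hFdef, hβdef]; unfold auxF auxB
    congr 1
    exact tsum_congr fun u => ENNReal.ofReal_mul (abs_nonneg _)
  have hmain : (∑' t : ℤ, ∑' s : ℤ, ∑' u : ℤ,
        ENNReal.ofReal |b t| * ENNReal.ofReal |b s| *
          ∫⁻ v : ℝ, ENNReal.ofReal
            |φ (((t + u : ℤ) : ℝ) * Δ + v) * φ ((s : ℝ) * Δ + v) *
              φ ((u : ℝ) * Δ + v) * φ v|)
      = (∫⁻ t in Ioc (0 : ℝ) Δ,
        (∑' s : ℤ, ENNReal.ofReal |φ (t + (s : ℝ) * Δ)| *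
          ∑' u : ℤ, ENNReal.ofReal (|b u| * |φ (t + (s : ℝ) * Δ - (u : ℝ) * Δ)|)) ^ 2) := by
    calc (∑' t : ℤ, ∑' s : ℤ, ∑' u : ℤ,
          ENNReal.ofReal |b t| * ENNReal.ofReal |b s| *
            ∫⁻ v : ℝ, ENNReal.ofReal
              |φ (((t + u : ℤ) : ℝ) * Δ + v) * φ ((s : ℝ) * Δ + v) *
                φ ((u : ℝ) * Δ + v) * φ v|)
        = ∑' t : ℤ, ∑' s : ℤ, ∑' u : ℤ, ∫⁻ v, β t * β s *
            (F (v + ((t : ℝ) + (u : ℝ)) * Δ) * F (v + (s : ℝ) * Δ) * F (v + (u : ℝ) * Δ) * F v) := by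
          refine tsum_congr fun t => tsum_congr fun s => tsum_congr fun u => ?_
          rw [hstep t s u, lintegral_const_mul' (β t * β s) _ (hβtop t s)]
          rw [hβdef]; unfold auxB; ring
      _ = ∑' t : ℤ, ∑' s : ℤ, ∫⁻ v, ∑' u : ℤ, β t * β s *
            (F (v + ((t : ℝ) + (u : ℝ)) * Δ) * F (v + (s : ℝ) * Δ) * F (v + (u : ℝ) * Δ) * F v) :=
          tsum_congr fun t => tsum_congr fun s =>
            (lintegral_tsum fun u => (hmeas t s u).aemeasurable).symm
      _ = ∑' t : ℤ, ∫⁻ v, ∑' s : ℤ, ∑' u : ℤ, β t * β s *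
            (F (v + ((t : ℝ) + (u : ℝ)) * Δ) * F (v + (s : ℝ) * Δ) * F (v + (u : ℝ) * Δ) * F v) :=
          tsum_congr fun t => (lintegral_tsum fun s =>
            (Measurable.ennreal_tsum fun u => hmeas t s u).aemeasurable).symm
      _ = ∫⁻ v, ∑' t : ℤ, ∑' s : ℤ, ∑' u : ℤ, β t * β s *
            (F (v + ((t : ℝ) + (u : ℝ)) * Δ) * F (v + (s : ℝ) * Δ) * F (v + (u : ℝ) * Δ) * F v) :=
          (lintegral_tsum fun t => (Measurable.ennreal_tsum fun s =>
            Measurable.ennreal_tsum fun u => hmeas t s u).aemeasurable).symm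
      _ = ∫⁻ v, F v * auxH β F Δ v * auxG β F Δ v :=
          lintegral_congr fun v => key_pointwise β F Δ v
      _ = ∑' k : ℤ, ∫⁻ v in Ioc (0 : ℝ) Δ,
            F (v + (k : ℝ) * Δ) * auxH β F Δ (v + (k : ℝ) * Δ) * auxG β F Δ (v + (k : ℝ) * Δ) :=
          periodize Δ hΔ (fun w => F w * auxH β F Δ w * auxG β F Δ w)
      _ = ∫⁻ v in Ioc (0 : ℝ) Δ, ∑' k : ℤ,
            F (v + (k : ℝ) * Δ) * auxH β F Δ (v + (k : ℝ) * Δ) * auxG β F Δ (v + (k : ℝ) * Δ) :=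
          (lintegral_tsum fun k =>
            (((hFshift _).mul (hHshift _)).mul (hGm.comp (measurable_add_const _))).aemeasurable).symm
      _ = ∫⁻ v in Ioc (0 : ℝ) Δ, auxG β F Δ v ^ 2 := by
          refine lintegral_congr fun v => ?_
          calc (∑' k : ℤ,
              F (v + (k : ℝ) * Δ) * auxH β F Δ (v + (k : ℝ) * Δ) * auxG β F Δ (v + (k : ℝ) * Δ))
              = ∑' k : ℤ, (F (v + (k : ℝ) * Δ) * auxH β F Δ (v + (k : ℝ) * Δ)) * auxG β F Δ v :=
                tsum_congr fun k => by rw [auxG_per]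
            _ = (∑' k : ℤ, F (v + (k : ℝ) * Δ) * auxH β F Δ (v + (k : ℝ) * Δ)) * auxG β F Δ v :=
                ENNReal.tsum_mul_right
            _ = auxG β F Δ v ^ 2 := by
                have : auxG β F Δ v
                    = ∑' k : ℤ, F (v + (k : ℝ) * Δ) * auxH β F Δ (v + (k : ℝ) * Δ) := rfl
                rw [← this, sq]
      _ = (∫⁻ t in Ioc (0 : ℝ) Δ,
            (∑' s : ℤ, ENNReal.ofReal |φ (t + (s : ℝ) * Δ)| *
              ∑' u : ℤ, ENNReal.ofReal (|b u| * |φ (t + (s : ℝ) * Δ - (u : ℝ) * Δ)|)) ^ 2) :=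
          lintegral_congr fun x => by rw [hRHS x]
  exact ⟨le_of_eq hmain, hmain ▸ hG⟩
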